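/- Let a, v, b ∈ [0,1]^N with a ≼ v ≼ b componentwise and v_j > 0 for all j, let ε ∈ (0,1), and suppose max{b_j − v_j, v_j − a_j} ≤ ε/K for every j ∈ [N]. Let θ_a, θ_v, θ_b be the optimal expected rewards under a, v, b, and let S_v = Top([N], v, θ_v) be the best assortment. Then every item i ∈ [N] \ S_v whose reward gap satisfies Δ_i > 8ε satisfies: for every θ ∈ [θ_a, θ_b], i ∉ Top([N], g^{(i)}, θ), where g^{(i)} agrees with a on all coordinates except that its i-th coordinate equals b_i. -/

import Mathlib

/-- The expected reward `R(S, v)` of an assortment `S`. -/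
noncomputable def Rew {N : ℕ} (r v : Fin N → ℝ) (S : Finset (Fin N)) : ℝ :=
  (∑ i ∈ S, r i * v i) / (1 + ∑ i ∈ S, v i)

/-- `θ_v`: the optimal expected reward over assortments of size at most `K`. -/
noncomputable def thetaOpt (N K : ℕ) (r v : Fin N → ℝ) : ℝ :=
  ((Finset.univ : Finset (Fin N)).powerset.filter (fun S => S.card ≤ K)).sup'
    ⟨∅, by simp⟩ (Rew r v)

/- `Top([N], w, θ)`: take the `min {K, N}` items `i` with the largest values
`(r i − θ) * w i` (ties broken in favor of smaller index), then remove all items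
with `r i − θ ≤ 0`. -/
open Classical in
noncomputable def TopSet (N K : ℕ) (r w : Fin N → ℝ) (θ : ℝ) : Finset (Fin N) :=
  ((List.insertionSort (fun i j =>
      (r j - θ) * w j < (r i - θ) * w i ∨
      ((r i - θ) * w i = (r j - θ) * w j ∧ i ≤ j)) (List.finRange N)).take
    (min K N)).toFinset.filter (fun i => θ < r i)
/-- The `k`-th largest value of `f` over `Fin N` (1-indexed). -/
noncomputable def kthLargest (N k : ℕ) (f : Fin N → ℝ) : ℝ :=
  (List.insertionSort (· ≥ ·) ((List.finRange N).map f)).getD (k - 1) 0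

/-! ## Auxiliary lemmas -/

section SortLemmas

variable {N : ℕ} (val : Fin N → ℝ)

theorem srelAux_total : ∀ i j : Fin N,
    (val j < val i ∨ (val i = val j ∧ i ≤ j)) ∨ (val i < val j ∨ (val j = val i ∧ j ≤ i)) := by
  intro i j
  rcases lt_trichotomy (val i) (val j) with h | h | h
  · exact Or.inr (Or.inl h)
  · rcases le_total i j with hij | hij
    · exact Or.inl (Or.inr ⟨h, hij⟩)
    · exact Or.inr (Or.inr ⟨h.symm, hij⟩)
  · exact Or.inl (Or.inl h)

theorem srelAux_trans : ∀ i j k : Fin N,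
    (val j < val i ∨ (val i = val j ∧ i ≤ j)) →
    (val k < val j ∨ (val j = val k ∧ j ≤ k)) →
    (val k < val i ∨ (val i = val k ∧ i ≤ k)) := by
  intro i j k hij hjk
  rcases hij with h1 | ⟨h1, h1'⟩ <;> rcases hjk with h2 | ⟨h2, h2'⟩
  · exact Or.inl (h2.trans h1)
  · exact Or.inl (h2 ▸ h1)
  · exact Or.inl (h1 ▸ h2)
  · exact Or.inr ⟨h1.trans h2, h1'.trans h2'⟩

/-- knockout: if there is a set of `K` items strictly dominating `i`, then `i` is
not in the take-`K` prefix of a sorted list. -/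
theorem knockoutAux {K : ℕ} {L : List (Fin N)}
    (hsL : L.Pairwise (fun i j : Fin N => val j < val i ∨ (val i = val j ∧ i ≤ j)))
    (hpL : L.Perm (List.finRange N))
    {i : Fin N} (T : Finset (Fin N)) (hcard : K ≤ T.card) (hiT : i ∉ T)
    (hdom : ∀ j ∈ T, val i < val j)
    (hmem : i ∈ L.take (min K N)) : False := by
  have hEx : ∃ j ∈ T, j ∉ (L.take (min K N)).toFinset := by
    by_contra hcon
    push_neg at hcon
    have hsub : insert i T ⊆ (L.take (min K N)).toFinset := by
      intro x hx
      rcases Finset.mem_insert.mp hx with rfl | hx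
      · exact List.mem_toFinset.mpr hmem
      · exact hcon x hx
    have hlen : (L.take (min K N)).toFinset.card ≤ K := by
      calc (L.take (min K N)).toFinset.card ≤ (L.take (min K N)).length :=
            List.toFinset_card_le _
        _ = min (min K N) L.length := List.length_take
        _ ≤ K := (min_le_left _ _).trans (min_le_left _ _)
    have h1 := Finset.card_le_card hsub
    rw [Finset.card_insert_of_notMem hiT] at h1
    omega
  obtain ⟨j, hjT, hjnot⟩ := hEx
  have hjL : j ∈ L := hpL.mem_iff.mpr (List.mem_finRange j)
  have hjdrop : j ∈ L.drop (min K N) := by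
    rw [← List.take_append_drop (min K N) L] at hjL
    rcases List.mem_append.mp hjL with h | h
    · exact absurd (List.mem_toFinset.mpr h) hjnot
    · exact h
  have hrel := hsL.rel_of_mem_take_of_mem_drop hmem hjdrop
  have := hdom j hjT
  rcases hrel with h | ⟨h, _⟩ <;> linarith

/-- Every item in the take-`K` prefix of the sorted list has value at least the
`K`-th largest value. -/
theorem kthBoundAux {K : ℕ} (hK : 1 ≤ K) (hKN : K ≤ N) {L : List (Fin N)}
    (hsL : L.Pairwise (fun i j : Fin N => val j < val i ∨ (val i = val j ∧ i ≤ j)))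
    (hpL : L.Perm (List.finRange N))
    {j : Fin N} (hj : j ∈ L.take (min K N)) :
    kthLargest N K val ≤ val j := by
  set M := List.insertionSort (· ≥ ·) ((List.finRange N).map val) with hM
  have hsM : List.Pairwise (· ≥ ·) M := List.pairwise_insertionSort _ _
  have hsLmap : List.Pairwise (· ≥ ·) (L.map val) := by
    rw [List.pairwise_map]
    refine hsL.imp ?_
    rintro a b (h | ⟨h, _⟩)
    · exact h.le
    · exact h.ge
  have hperm : (L.map val).Perm M :=
    (hpL.map val).trans (List.perm_insertionSort _ _).symm
  haveI : Std.Antisymm (α := ℝ) (· ≥ ·) := ⟨fun a b h1 h2 => le_antisymm h2 h1⟩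
  have hEq : L.map val = M := List.Perm.eq_of_pairwise' hsLmap hsM hperm
  have hLlen : L.length = N := hpL.length_eq.trans (List.length_finRange (n := N))
  have hMlen : M.length = N := by
    rw [← hEq, List.length_map, hLlen]
  obtain ⟨m, hm, hLm⟩ := List.mem_take_iff_getElem.mp hj
  have hmK : m < K := lt_of_lt_of_le hm ((min_le_left _ _).trans (min_le_left _ _))
  have hmN : m < N := by omega
  have hval : val j = M.getD m 0 := by
    rw [← hEq, List.getD_eq_getElem _ 0 (by rw [List.length_map]; omega),
      List.getElem_map, hLm]
  have hkth : kthLargest N K val = M.getD (K-1) 0 := rfl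
  rw [hkth, hval, List.getD_eq_getElem M 0 (show K - 1 < M.length by omega),
    List.getD_eq_getElem M 0 (show m < M.length by omega)]
  rcases Nat.lt_or_ge m (K-1) with h | h
  · exact List.pairwise_iff_getElem.mp hsM m (K-1) (by omega) (by omega) h
  · have hEqm : K - 1 = m := by omega
    simp only [hEqm]
    exact le_refl _

/-- Wrapper for `knockoutAux` applied to the insertion sort list. -/
theorem knockoutAuxSort {K : ℕ} (hK : 1 ≤ K) (hKN : K ≤ N)
    [inst : DecidableRel (fun i j : Fin N => val j < val i ∨ (val i = val j ∧ i ≤ j))]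
    {i : Fin N} (T : Finset (Fin N)) (hcard : K ≤ T.card) (hiT : i ∉ T)
    (hdom : ∀ j ∈ T, val i < val j)
    (hmem : i ∈ (List.insertionSort
      (fun i j : Fin N => val j < val i ∨ (val i = val j ∧ i ≤ j))
      (List.finRange N)).take (min K N)) : False := by
  refine knockoutAux val ?_ ?_ T hcard hiT hdom hmem
  · exact @List.pairwise_insertionSort _ _ inst ⟨srelAux_total val⟩ ⟨srelAux_trans val⟩ _
  · exact List.perm_insertionSort _ _

/-- Wrapper for `kthBoundAux` applied to the insertion sort list. -/
theorem kthBoundAuxSort {K : ℕ} (hK : 1 ≤ K) (hKN : K ≤ N)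
    [inst : DecidableRel (fun i j : Fin N => val j < val i ∨ (val i = val j ∧ i ≤ j))]
    {j : Fin N}
    (hj : j ∈ (List.insertionSort
      (fun i j : Fin N => val j < val i ∨ (val i = val j ∧ i ≤ j))
      (List.finRange N)).take (min K N)) :
    kthLargest N K val ≤ val j := by
  refine kthBoundAux val hK hKN ?_ ?_ hj
  · exact @List.pairwise_insertionSort _ _ inst ⟨srelAux_total val⟩ ⟨srelAux_trans val⟩ _
  · exact List.perm_insertionSort _ _

end SortLemmas

section Theta
variable {N K : ℕ} (r u w : Fin N → ℝ)

theorem emptyMemCandAux :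
    ∅ ∈ ((Finset.univ : Finset (Fin N)).powerset.filter (fun S => S.card ≤ K)) := by
  simp

theorem thetaOptNonnegAux (hr : ∀ j, 0 ≤ r j) (hu : ∀ j, 0 ≤ u j) :
    0 ≤ thetaOpt N K r u := by
  have h : Rew r u ∅ ≤ thetaOpt N K r u :=
    Finset.le_sup' (Rew r u) (emptyMemCandAux (N := N) (K := K))
  have h0 : Rew r u ∅ = 0 := by simp [Rew]
  linarith

theorem thetaOptLeOneAux (hr : ∀ j, r j ≤ 1) (hu : ∀ j, 0 ≤ u j) :
    thetaOpt N K r u ≤ 1 := by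
  apply Finset.sup'_le
  intro S _
  have h2 : (0:ℝ) ≤ ∑ i ∈ S, u i := Finset.sum_nonneg fun j _ => hu j
  rw [Rew, div_le_one (by linarith)]
  have : ∑ i ∈ S, r i * u i ≤ ∑ i ∈ S, u i :=
    Finset.sum_le_sum fun j _ => mul_le_of_le_one_left (hu j) (hr j)
  linarith

theorem thetaOptLipschitzAux {ε : ℝ} (hK : 1 ≤ K) (hε : 0 ≤ ε)
    (hr0 : ∀ j, 0 ≤ r j) (hr1 : ∀ j, r j ≤ 1)
    (hu : ∀ j, 0 ≤ u j) (huw : ∀ j, u j ≤ w j)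
    (hd : ∀ j, w j - u j ≤ ε / K) :
    thetaOpt N K r w ≤ thetaOpt N K r u + ε := by
  apply Finset.sup'_le
  intro S hS
  have hcard : S.card ≤ K := (Finset.mem_filter.mp hS).2
  have key : Rew r w S ≤ Rew r u S + ε := by
    set A := ∑ i ∈ S, r i * u i with hA
    set B := ∑ i ∈ S, u i with hB
    set A' := ∑ i ∈ S, r i * w i with hA'
    set B' := ∑ i ∈ S, w i with hB'
    have hA0 : 0 ≤ A := Finset.sum_nonneg fun j _ => mul_nonneg (hr0 j) (hu j)
    have hB0 : 0 ≤ B := Finset.sum_nonneg fun j _ => hu j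
    have hBB : B ≤ B' := Finset.sum_le_sum fun j _ => huw j
    have hA'le : A' ≤ A + (B' - B) := by
      have : A' ≤ ∑ i ∈ S, (r i * u i + (w i - u i)) := by
        apply Finset.sum_le_sum
        intro j _
        nlinarith [hr1 j, hr0 j, huw j, hu j]
      rwa [Finset.sum_add_distrib, ← hA, Finset.sum_sub_distrib, ← hB', ← hB] at this
    have hD : B' - B ≤ ε := by
      have h1 : B' - B ≤ ∑ _i ∈ S, (ε / K) := by
        rw [← Finset.sum_sub_distrib]
        exact Finset.sum_le_sum fun j _ => hd j
      have h2 : ∑ _i ∈ S, (ε / K) = (S.card : ℝ) * (ε / K) := by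
        rw [Finset.sum_const, nsmul_eq_mul]
      have h3 : (S.card : ℝ) ≤ (K : ℝ) := Nat.cast_le.mpr hcard
      have h4 : (0:ℝ) < K := by exact_mod_cast hK
      have h5 : (S.card : ℝ) * (ε / K) ≤ (K : ℝ) * (ε / K) :=
        mul_le_mul_of_nonneg_right h3 (by positivity)
      have h6 : (K : ℝ) * (ε / K) = ε := by field_simp
      linarith
    have h1 : (0:ℝ) < 1 + B := by linarith
    have h2 : (0:ℝ) < 1 + B' := by linarith
    have step1 : A' / (1 + B') ≤ (A + (B' - B)) / (1 + B) :=
      div_le_div₀ (by linarith) hA'le h1 (by linarith)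
    have step2 : (A + (B' - B)) / (1 + B) = A / (1 + B) + (B' - B) / (1 + B) :=
      add_div _ _ _
    have step3 : (B' - B) / (1 + B) ≤ B' - B :=
      div_le_self (by linarith) (by linarith)
    rw [Rew, Rew]
    rw [← hA, ← hB, ← hA', ← hB']
    linarith
  have h2 : Rew r u S ≤ thetaOpt N K r u := Finset.le_sup' (Rew r u) hS
  linarith
end Theta

set_option maxHeartbeats 2000000 in
/-- If `a ≼ v ≼ b`, the entrywise estimation error is at most `ε/K`, and
`i ∉ S_v` has reward gap `Δ_i > 8ε` (where `Δ_i = η⁽ᴷ⁾ − η_i` if `|S_v| = K`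
and `Δ_i = −η_i` otherwise, with `η_j = (r_j − θ_v) v_j`), then for every
`θ ∈ [θ_a, θ_b]` we have `i ∉ Top([N], g⁽ⁱ⁾, θ)`, where `g⁽ⁱ⁾` agrees with `a`
except that its `i`-th coordinate is `b i`. -/
theorem stmt11 (N K : ℕ) (hK : 1 ≤ K) (hKN : K ≤ N) (r a v b : Fin N → ℝ)
    (ε : ℝ) (hε : 0 < ε ∧ ε < 1)
    (hr : ∀ j, 0 < r j ∧ r j ≤ 1)
    (ha : ∀ j, 0 ≤ a j ∧ a j ≤ 1) (hv : ∀ j, 0 < v j ∧ v j ≤ 1)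
    (hb : ∀ j, 0 ≤ b j ∧ b j ≤ 1)
    (hav : ∀ j, a j ≤ v j) (hvb : ∀ j, v j ≤ b j)
    (hest : ∀ j, max (b j - v j) (v j - a j) ≤ ε / K)
    (i : Fin N) (hi : i ∉ TopSet N K r v (thetaOpt N K r v))
    (hΔ : 8 * ε <
      if (TopSet N K r v (thetaOpt N K r v)).card = K then
        kthLargest N K (fun j => (r j - thetaOpt N K r v) * v j) -
          (r i - thetaOpt N K r v) * v i
      else -((r i - thetaOpt N K r v) * v i)) :
    ∀ θ, thetaOpt N K r a ≤ θ → θ ≤ thetaOpt N K r b →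
      i ∉ TopSet N K r (Function.update a i (b i)) θ := by
  obtain ⟨hε0, hε1⟩ := hε
  intro θ hθa hθb
  set θv := thetaOpt N K r v with hθvdef
  have hK' : (1:ℝ) ≤ (K:ℝ) := by exact_mod_cast hK
  have hεK : ε / K ≤ ε := div_le_self hε0.le hK'
  have hbv' : ∀ j, b j - v j ≤ ε / K := fun j => (le_max_left _ _).trans (hest j)
  have hva' : ∀ j, v j - a j ≤ ε / K := fun j => (le_max_right _ _).trans (hest j)
  -- θ is within ε of θv
  have hlip1 : thetaOpt N K r v ≤ thetaOpt N K r a + ε :=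
    thetaOptLipschitzAux r a v hK hε0.le (fun j => (hr j).1.le) (fun j => (hr j).2)
      (fun j => (ha j).1) hav hva'
  have hlip2 : thetaOpt N K r b ≤ thetaOpt N K r v + ε :=
    thetaOptLipschitzAux r v b hK hε0.le (fun j => (hr j).1.le) (fun j => (hr j).2)
      (fun j => (hv j).1.le) hvb hbv'
  have hθ1 : θ ≤ θv + ε := hθb.trans hlip2
  have hθ2 : θv - ε ≤ θ := by
    rw [hθvdef]; linarith
  have hθv0 : 0 ≤ θv :=
    thetaOptNonnegAux r v (fun j => (hr j).1.le) (fun j => (hv j).1.le)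
  have hθv1 : θv ≤ 1 :=
    thetaOptLeOneAux r v (fun j => (hr j).2) (fun j => (hv j).1.le)
  by_cases hcase : (TopSet N K r v θv).card = K
  · -- |S_v| = K
    rw [if_pos hcase] at hΔ
    intro hmem
    simp only [TopSet, Finset.mem_filter, List.mem_toFinset] at hmem
    obtain ⟨h1, h2⟩ := hmem
    refine knockoutAux (fun k => (r k - θ) * Function.update a i (b i) k)
      ?_ ?_ (TopSet N K r v θv) (le_of_eq hcase.symm) hi ?_ h1
    · exact @List.pairwise_insertionSort _ _ _ ⟨srelAux_total _⟩ ⟨srelAux_trans _⟩ _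
    · exact List.perm_insertionSort _ _
    · intro j hj
      have hji : j ≠ i := fun h => hi (h ▸ hj)
      simp only [Function.update_self, Function.update_of_ne hji]
      -- extract membership facts about j
      simp only [TopSet, Finset.mem_filter, List.mem_toFinset] at hj
      obtain ⟨hj1, hj2⟩ := hj
      have hkb : kthLargest N K (fun k => (r k - θv) * v k) ≤ (r j - θv) * v j := by
        refine kthBoundAux (fun k => (r k - θv) * v k) hK hKN ?_ ?_ hj1
        · exact @List.pairwise_insertionSort _ _ _ ⟨srelAux_total _⟩ ⟨srelAux_trans _⟩ _
        · exact List.perm_insertionSort _ _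
      -- numeric facts
      have hrj := hr j
      have haj := ha j
      have hvj := hv j
      have hri := hr i
      have hbi := hb i
      have hvi := hv i
      have hrθv : (0:ℝ) ≤ r j - θv := by linarith [hj2]
      have hrθv1 : r j - θv ≤ 1 := by linarith [hrj.2]
      have hvaj : 0 ≤ v j - a j := by linarith [hav j]
      have e1 : (r j - θv) * v j - (r j - θv) * a j ≤ ε := by
        have h := mul_le_mul hrθv1 ((hva' j).trans hεK) hvaj zero_le_one
        nlinarith
      have e2 : -ε ≤ (θv - θ) * a j := by
        rcases le_or_gt 0 (θv - θ) with h | h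
        · nlinarith [(ha j).1]
        · nlinarith [(ha j).2]
      have f1 : (r i - θv) * b i ≤ (r i - θv) * v i + ε := by
        rcases le_or_gt 0 (r i - θv) with h | h
        · have h' : r i - θv ≤ 1 := by linarith [hri.2]
          have := mul_le_mul h' ((hbv' i).trans hεK) (by linarith [hvb i]) zero_le_one
          nlinarith
        · nlinarith [hvb i]
      have f2 : (θv - θ) * b i ≤ ε := by
        rcases le_or_gt 0 (θv - θ) with h | h
        · nlinarith [hbi.2]
        · nlinarith [hbi.1]
      have ee1 : (r j - θ) * a j = (r j - θv) * a j + (θv - θ) * a j := by ring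
      have ee2 : (r i - θ) * b i = (r i - θv) * b i + (θv - θ) * b i := by ring
      linarith
  · -- |S_v| < K : r i is far below θ
    rw [if_neg hcase] at hΔ
    have hvi := hv i
    have hneg : r i - θv < 0 := by nlinarith
    have hle : r i - θv ≤ (r i - θv) * v i := by nlinarith [hvi.2]
    have hri : r i < θ := by linarith
    intro hmem
    simp only [TopSet, Finset.mem_filter] at hmem
    exact absurd hmem.2 (not_lt.mpr hri.le)
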